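/- On the Lie algebra ℝ × h₇ with structure equations as above, for the complex structure I_t (t ∈ (0,1), t ≠ 1/2) defined by I_t(e¹) = ((t-1)/t)e², I_t(e³) = e⁴, I_t(e⁵) = (1/t)e⁶, I_t(e⁷) = e⁸ (extended so I_t² = -Id), the (0,2)-component of d(e⁷ - i e⁸) with respect to I_t equals ((2t-1)/(2t-2)) (e¹ - i((t-1)/t) e⁴) ∧ (e³ - i e⁴) restricted to (0,2)-type, and in particular is nonzero for t ≠ 1/2 and zero for t = 1/2. -/

import Mathlib

/-- The coordinate functionals `e¹, …, e⁸` (complexified). -/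
noncomputable def e17 (i : Fin 8) : (Fin 8 → ℂ) → ℂ := fun v => v i

/-- Wedge product of two 1-forms, as a bilinear alternating 2-form. -/
noncomputable def wedge17 (a b : (Fin 8 → ℂ) → ℂ) : (Fin 8 → ℂ) → (Fin 8 → ℂ) → ℂ :=
  fun x y => a x * b y - a y * b x

/-- The complex structure `I_t` (`I_t e¹ = ((t-1)/t) e²`, `I_t e³ = e⁴`,
`I_t e⁵ = (1/t) e⁶`, `I_t e⁷ = e⁸`, extended with `I_t² = -Id`), transported to
the complexified vector space by duality. -/
noncomputable def Ivec17 (t : ℝ) (v : Fin 8 → ℂ) : Fin 8 → ℂ := fun i =>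
  if i = 0 then -(((t - 1) / t : ℝ) : ℂ) * v 1
  else if i = 1 then ((t / (t - 1) : ℝ) : ℂ) * v 0
  else if i = 2 then -v 3
  else if i = 3 then v 2
  else if i = 4 then -((1 / t : ℝ) : ℂ) * v 5
  else if i = 5 then (t : ℂ) * v 4
  else if i = 6 then -v 7
  else v 6

lemma I3' : Complex.I ^ 3 = -Complex.I := by
  rw [show (3:ℕ) = 2+1 from rfl, pow_succ, Complex.I_sq]; ring

lemma aux17 (t : ℝ) (x : Fin 8 → ℂ) (hx : Ivec17 t x = -Complex.I • x) :
    x 0 = -Complex.I * (((t - 1) / t : ℝ) : ℂ) * x 1 ∧ x 3 = Complex.I * x 2 := by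
  have h0 := congrFun hx 0
  have h2 := congrFun hx 2
  simp [Ivec17, Pi.smul_apply, smul_eq_mul] at h0 h2
  push_cast at h0 h2 ⊢
  constructor
  · linear_combination Complex.I * h0 + x 0 * Complex.I_sq
  · linear_combination h2

/-- On `ℝ × h₇`, the `(0,2)`-component of `d(e⁷ - i e⁸) = (e¹∧e³ - e²∧e⁴)
- i(e¹∧e⁴ + e²∧e³)` with respect to `I_t` — i.e. its restriction to pairs of
`(0,1)`-vectors — equals `((2t-1)/(2t-2)) (e¹ - i((t-1)/t) e²) ∧ (e³ - i e⁴)`;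
in particular it is nonzero for `t ≠ 1/2` and zero for `t = 1/2`. -/
theorem stmt17 (t : ℝ) (ht0 : 0 < t) (ht1 : t < 1) :
    (∀ x y : Fin 8 → ℂ,
      Ivec17 t x = -Complex.I • x → Ivec17 t y = -Complex.I • y →
      (wedge17 (e17 0) (e17 2) x y - wedge17 (e17 1) (e17 3) x y)
          - Complex.I * (wedge17 (e17 0) (e17 3) x y + wedge17 (e17 1) (e17 2) x y) =
        ((((2 * t - 1) : ℝ) : ℂ) / (((2 * t - 2) : ℝ) : ℂ)) *
          wedge17 (fun v => e17 0 v - Complex.I * (((t - 1) / t : ℝ) : ℂ) * e17 1 v)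
            (fun v => e17 2 v - Complex.I * e17 3 v) x y) ∧
    (t ≠ 1 / 2 → ∃ x y : Fin 8 → ℂ,
      Ivec17 t x = -Complex.I • x ∧ Ivec17 t y = -Complex.I • y ∧
      (wedge17 (e17 0) (e17 2) x y - wedge17 (e17 1) (e17 3) x y)
          - Complex.I * (wedge17 (e17 0) (e17 3) x y + wedge17 (e17 1) (e17 2) x y) ≠ 0) ∧
    (t = 1 / 2 → ∀ x y : Fin 8 → ℂ,
      Ivec17 t x = -Complex.I • x → Ivec17 t y = -Complex.I • y →
      (wedge17 (e17 0) (e17 2) x y - wedge17 (e17 1) (e17 3) x y)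
          - Complex.I * (wedge17 (e17 0) (e17 3) x y + wedge17 (e17 1) (e17 2) x y) = 0) := by
  have ht0c : (t : ℂ) ≠ 0 := by exact_mod_cast ht0.ne'
  have ht1c : (t : ℂ) - 1 ≠ 0 := by
    have : (t : ℝ) - 1 ≠ 0 := by linarith
    exact_mod_cast fun h => this (by exact_mod_cast h)
  refine ⟨?_, ?_, ?_⟩
  · intro x y hx hy
    obtain ⟨hx0, hx3⟩ := aux17 t x hx
    obtain ⟨hy0, hy3⟩ := aux17 t y hy
    simp only [wedge17, e17]
    rw [hx0, hx3, hy0, hy3]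
    push_cast
    have h2 : (2 * (t : ℂ) - 2) ≠ 0 := by
      intro h
      apply ht1c
      linear_combination h / 2
    field_simp
    ring_nf
    simp only [I3', Complex.I_sq]
    ring
  · intro h12
    set c : ℂ := (((t - 1) / t : ℝ) : ℂ) with hcdef
    refine ⟨![-Complex.I * c, 1, 0, 0, 0, 0, 0, 0],
            ![0, 0, 1, Complex.I, 0, 0, 0, 0], ?_, ?_, ?_⟩
    · funext i
      fin_cases i
      · show -c * 1 = -Complex.I * (-Complex.I * c)
        linear_combination -c * Complex.I_sq
      · show ((t / (t - 1) : ℝ) : ℂ) * (-Complex.I * c) = -Complex.I * 1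
        rw [hcdef]; push_cast; field_simp
      · show -(0 : ℂ) = -Complex.I * 0
        simp
      · show (0 : ℂ) = -Complex.I * 0
        simp
      · show -((1 / t : ℝ) : ℂ) * 0 = -Complex.I * 0
        simp
      · show (t : ℂ) * 0 = -Complex.I * 0
        simp
      · show -(0 : ℂ) = -Complex.I * 0
        simp
      · show (0 : ℂ) = -Complex.I * 0
        simp
    · funext i
      fin_cases i
      · show -c * 0 = -Complex.I * 0
        simp
      · show ((t / (t - 1) : ℝ) : ℂ) * 0 = -Complex.I * 0
        simp
      · show -Complex.I = -Complex.I * 1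
        ring
      · show (1 : ℂ) = -Complex.I * Complex.I
        simp [Complex.I_mul_I]
      · show -((1 / t : ℝ) : ℂ) * 0 = -Complex.I * 0
        simp
      · show (t : ℂ) * 0 = -Complex.I * 0
        simp
      · show -(0 : ℂ) = -Complex.I * 0
        simp
      · show (0 : ℂ) = -Complex.I * 0
        simp
    · have hc : c + 1 ≠ 0 := by
        rw [hcdef]
        have h : ((t - 1) / t + 1 : ℝ) ≠ 0 := by
          have ht : t ≠ 0 := ht0.ne'
          field_simp
          intro h
          apply h12
          rcases div_eq_zero_iff.mp h with h | h
          · linarith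
          · exact absurd h ht
        exact_mod_cast fun hh => h (by exact_mod_cast hh)
      have hval : ((-Complex.I * c) * 1 - 0 * 0 - (1 * Complex.I - 0 * 0))
            - Complex.I * (((-Complex.I * c) * Complex.I - 0 * 0) + (1 * 1 - 0 * 0)) =
          -2 * Complex.I * (c + 1) := by
        linear_combination Complex.I * c * Complex.I_sq
      show ((-Complex.I * c) * 1 - 0 * 0 - (1 * Complex.I - 0 * 0))
            - Complex.I * (((-Complex.I * c) * Complex.I - 0 * 0) + (1 * 1 - 0 * 0)) ≠ 0
      rw [hval]
      exact mul_ne_zero (by simp [Complex.I_ne_zero]) hc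

  · intro h12 x y hx hy
    obtain ⟨hx0, hx3⟩ := aux17 t x hx
    obtain ⟨hy0, hy3⟩ := aux17 t y hy
    simp only [wedge17, e17]
    rw [hx0, hx3, hy0, hy3, h12]
    push_cast
    ring_nf
    simp only [I3', Complex.I_sq]
    ring
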